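/- arXiv:1111.1294 — 2 statements merged into one kernel-verified Lean document; each statement's English description precedes it below -/
import Mathlib

section
/- If S has γ-rectangular Apéry set, then S is M-pure symmetric; that is, for every ω ∈ Ap(S) we have ω ⪯_M f + m (there exists u ∈ S with ω + u = f + m and ord(ω) + ord(u) = ord(f + m)). -/
open Finset

/-- `S` is a numerical semigroup: a submonoid of `(ℕ, +)` with finite complement. -/
def IsNumSgp (S : Set ℕ) : Prop :=
  0 ∈ S ∧ (∀ a ∈ S, ∀ b ∈ S, a + b ∈ S) ∧ (Sᶜ : Set ℕ).Finite

/-- `s` belongs to the Apéry set of `S` with respect to `m`: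
`s ∈ S` and `s - m ∉ S` (i.e. no `u ∈ S` with `u + m = s`). -/
def InApery (S : Set ℕ) (m s : ℕ) : Prop :=
  s ∈ S ∧ ∀ u ∈ S, u + m ≠ s

def AperySet (S : Set ℕ) (m : ℕ) : Set ℕ := {s | InApery S m s}

/-- `ordS S s` is the largest `h` such that `s` is a sum of `h` nonzero elements of `S`. -/
noncomputable def ordS (S : Set ℕ) (s : ℕ) : ℕ :=
  sSup {h : ℕ | ∃ f : Fin h → ℕ, (∀ j, f j ∈ S ∧ f j ≠ 0) ∧ ∑ j, f j = s}

/-- `g` generates `S`. -/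
def Generates (S : Set ℕ) {ν : ℕ} (g : Fin ν → ℕ) : Prop :=
  ∀ s, s ∈ S ↔ ∃ lam : Fin ν → ℕ, ∑ i, lam i * g i = s

/-- `g` is a minimal generating system of `S`: it generates `S`
and no `g i` is generated by the remaining generators. -/
def MinimalGen (S : Set ℕ) {ν : ℕ} (g : Fin ν → ℕ) : Prop :=
  Generates S g ∧ ∀ i, ¬ ∃ lam : Fin ν → ℕ, lam i = 0 ∧ ∑ j, lam j * g j = g i

/-- `lam` is a maximal representation of `s`: the coefficient sum equals `ordS S s`. -/
def IsMaxRep (S : Set ℕ) {ν : ℕ} (g : Fin ν → ℕ) (lam : Fin ν → ℕ) (s : ℕ) : Prop :=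
  ∑ i, lam i * g i = s ∧ ∑ i, lam i = ordS S s

/-- `s` has a unique maximal representation. -/
def UniqueMaxRep (S : Set ℕ) {ν : ℕ} (g : Fin ν → ℕ) (s : ℕ) : Prop :=
  ∃! lam : Fin ν → ℕ, IsMaxRep S g lam s

/-- `β_i = max {h | h g_i ∈ Ap(S) and ord(h g_i) = h}`. -/
noncomputable def betaN (S : Set ℕ) (m : ℕ) {ν : ℕ} (g : Fin ν → ℕ) (i : Fin ν) : ℕ :=
  sSup {h : ℕ | InApery S m (h * g i) ∧ ordS S (h * g i) = h}

/-- `γ_i = max {h | h g_i ∈ Ap(S), ord(h g_i) = h and h g_i has a unique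
maximal representation}`. -/
noncomputable def gammaN (S : Set ℕ) (m : ℕ) {ν : ℕ} (g : Fin ν → ℕ) (i : Fin ν) : ℕ :=
  sSup {h : ℕ | InApery S m (h * g i) ∧ ordS S (h * g i) = h ∧ UniqueMaxRep S g (h * g i)}

/-- `B = {Σ_{i≥2} λ_i g_i : 0 ≤ λ_i ≤ β_i}`. -/
def Bset (S : Set ℕ) (m : ℕ) {ν : ℕ} [NeZero ν] (g : Fin ν → ℕ) : Set ℕ :=
  {s | ∃ lam : Fin ν → ℕ, lam 0 = 0 ∧ (∀ i, lam i ≤ betaN S m g i) ∧ ∑ i, lam i * g i = s}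

/-- `Γ = {Σ_{i≥2} λ_i g_i : 0 ≤ λ_i ≤ γ_i}`. -/
def GammaSet (S : Set ℕ) (m : ℕ) {ν : ℕ} [NeZero ν] (g : Fin ν → ℕ) : Set ℕ :=
  {s | ∃ lam : Fin ν → ℕ, lam 0 = 0 ∧ (∀ i, lam i ≤ gammaN S m g i) ∧ ∑ i, lam i * g i = s}

/-- `s ⪯_M t`. -/
def predM (S : Set ℕ) (s t : ℕ) : Prop :=
  ∃ u ∈ S, s + u = t ∧ ordS S s + ordS S u = ordS S t

section Aux

/-- The defining set of `ordS`. -/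
def ordSet (S : Set ℕ) (s : ℕ) : Set ℕ :=
  {h : ℕ | ∃ f : Fin h → ℕ, (∀ j, f j ∈ S ∧ f j ≠ 0) ∧ ∑ j, f j = s}

lemma ordS_eq_sSup (S : Set ℕ) (s : ℕ) : ordS S s = sSup (ordSet S s) := rfl

lemma ordSet_bddAbove (S : Set ℕ) (s : ℕ) : BddAbove (ordSet S s) := by
  refine ⟨s, fun h hh => ?_⟩
  obtain ⟨f, hf, hsum⟩ := hh
  calc h = ∑ _j : Fin h, 1 := by simp
  _ ≤ ∑ j, f j := Finset.sum_le_sum fun j _ => Nat.one_le_iff_ne_zero.2 (hf j).2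
  _ = s := hsum

lemma ordSet_add (S : Set ℕ) {a b x y : ℕ} (ha : a ∈ ordSet S x) (hb : b ∈ ordSet S y) :
    a + b ∈ ordSet S (x + y) := by
  obtain ⟨f, hf, hfs⟩ := ha
  obtain ⟨p, hp, hps⟩ := hb
  refine ⟨Fin.append f p, fun j => ?_, ?_⟩
  · refine Fin.addCases (fun i => ?_) (fun i => ?_) j
    · simpa [Fin.append_left] using hf i
    · simpa [Fin.append_right] using hp i
  · rw [Fin.sum_univ_add]
    simp [Fin.append_left, Fin.append_right, hfs, hps]

lemma ordSet_nsmul (S : Set ℕ) {x : ℕ} (k : ℕ) (hx : x ∈ S) (hx0 : x ≠ 0) :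
    k ∈ ordSet S (k * x) := by
  refine ⟨fun _ => x, fun _ => ⟨hx, hx0⟩, ?_⟩
  simp [Finset.sum_const, mul_comm]

lemma rep_mem_ordSet (S : Set ℕ) {ν : ℕ} (g : Fin ν → ℕ) (hg : ∀ i, g i ∈ S ∧ g i ≠ 0)
    (lam : Fin ν → ℕ) : (∑ i, lam i) ∈ ordSet S (∑ i, lam i * g i) := by
  classical
  have key : ∀ t : Finset (Fin ν), (∑ i ∈ t, lam i) ∈ ordSet S (∑ i ∈ t, lam i * g i) := by
    intro t
    induction t using Finset.induction with
    | empty => exact ⟨fun j => j.elim0, fun j => j.elim0, by simp⟩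
    | insert _ _ hnotmem ih =>
      rw [Finset.sum_insert hnotmem, Finset.sum_insert hnotmem]
      exact ordSet_add S (ordSet_nsmul S _ (hg _).1 (hg _).2) ih
  exact key Finset.univ

lemma le_ordS_of_rep (S : Set ℕ) {ν : ℕ} (g : Fin ν → ℕ) (hg : ∀ i, g i ∈ S ∧ g i ≠ 0)
    (lam : Fin ν → ℕ) {s : ℕ} (hs : ∑ i, lam i * g i = s) : ∑ i, lam i ≤ ordS S s := by
  have := rep_mem_ordSet S g hg lam
  rw [hs] at this
  exact le_csSup (ordSet_bddAbove S s) this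

lemma ordS_le_of_rep (S : Set ℕ) (s : ℕ) (hb : ∀ h ∈ ordSet S s, h ≤ 0) : True := trivial

lemma exists_rep_of_parts (S : Set ℕ) {ν : ℕ} (g : Fin ν → ℕ) (hgen : Generates S g) :
    ∀ (h : ℕ) (f : Fin h → ℕ), (∀ j, f j ∈ S ∧ f j ≠ 0) →
      ∃ lam : Fin ν → ℕ, ∑ i, lam i * g i = ∑ j, f j ∧ h ≤ ∑ i, lam i := by
  intro h
  induction h with
  | zero => exact fun f _ => ⟨0, by simp, by simp⟩
  | succ n ih =>
    intro f hf
    obtain ⟨lam₁, h1, h2⟩ := ih (fun i => f i.castSucc) (fun i => hf _)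
    obtain ⟨lam₂, hl2⟩ := (hgen (f (Fin.last n))).1 (hf _).1
    have hl2pos : 1 ≤ ∑ i, lam₂ i := by
      by_contra hcon
      push_neg at hcon
      have hz : ∀ i ∈ Finset.univ, lam₂ i = 0 := by
        have : ∑ i, lam₂ i = 0 := by omega
        exact fun i hi => (Finset.sum_eq_zero_iff).1 this i hi
      have : ∑ i, lam₂ i * g i = 0 :=
        Finset.sum_eq_zero fun i hi => by rw [hz i hi, zero_mul]
      exact (hf (Fin.last n)).2 (by rw [← hl2, this])
    refine ⟨lam₁ + lam₂, ?_, ?_⟩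
    · rw [Fin.sum_univ_castSucc (f := f)]
      simp only [Pi.add_apply, add_mul, Finset.sum_add_distrib, h1, hl2]
    · simp only [Pi.add_apply]; rw [Finset.sum_add_distrib]; omega

lemma ordS_attained (S : Set ℕ) {s : ℕ} (hs : s ∈ S) : ordS S s ∈ ordSet S s := by
  apply Nat.sSup_mem _ (ordSet_bddAbove S s)
  rcases eq_or_ne s 0 with rfl | h
  · exact ⟨0, fun j => j.elim0, fun j => j.elim0, by simp⟩
  · exact ⟨1, fun _ => s, fun _ => ⟨hs, h⟩, by simp⟩

lemma exists_maxRep (S : Set ℕ) {ν : ℕ} (g : Fin ν → ℕ) (hgen : Generates S g)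
    (hg : ∀ i, g i ∈ S ∧ g i ≠ 0) {s : ℕ} (hs : s ∈ S) :
    ∃ lam : Fin ν → ℕ, ∑ i, lam i * g i = s ∧ ∑ i, lam i = ordS S s := by
  obtain ⟨f, hf, hfs⟩ := ordS_attained S hs
  obtain ⟨lam, h1, h2⟩ := exists_rep_of_parts S g hgen _ f hf
  rw [hfs] at h1
  exact ⟨lam, h1, le_antisymm (le_ordS_of_rep S g hg lam h1) h2⟩

lemma ordS_zero (S : Set ℕ) : ordS S 0 = 0 := by
  have h1 : (0 : ℕ) ∈ ordSet S 0 := ⟨fun j => j.elim0, fun j => j.elim0, by simp⟩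
  refine le_antisymm (csSup_le ⟨0, h1⟩ (fun b hb => ?_)) (Nat.zero_le _)
  obtain ⟨f, hf, hfs⟩ := hb
  calc b = ∑ _j : Fin b, 1 := by simp
  _ ≤ ∑ j, f j := Finset.sum_le_sum fun j _ => Nat.one_le_iff_ne_zero.2 (hf j).2
  _ = 0 := hfs

lemma subst_sum {ν : ℕ} (μ ν₂ : Fin ν → ℕ) (i : Fin ν) (w : Fin ν → ℕ) :
    (∑ j, (if j = i then ν₂ j else μ j + ν₂ j) * w j) + μ i * w i
      = (∑ j, μ j * w j) + ∑ j, ν₂ j * w j := by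
  classical
  rw [← Finset.add_sum_erase _ (fun j => (if j = i then ν₂ j else μ j + ν₂ j) * w j) (Finset.mem_univ i),
      ← Finset.add_sum_erase _ (fun j => μ j * w j) (Finset.mem_univ i),
      ← Finset.add_sum_erase _ (fun j => ν₂ j * w j) (Finset.mem_univ i)]
  simp only [if_pos rfl]
  rw [Finset.sum_congr rfl (fun j hj => show (if j = i then ν₂ j else μ j + ν₂ j) * w j = μ j * w j + ν₂ j * w j by
        rw [if_neg (Finset.ne_of_mem_erase hj), add_mul])]
  rw [Finset.sum_add_distrib]
  simp only [if_true]
  ring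

end Aux

lemma amgm_lt (a b : ℕ) (h : a ≠ b) : 2 * (a * b) < a * a + b * b := by
  zify
  have h' : (a:ℤ) - b ≠ 0 := sub_ne_zero.mpr (by exact_mod_cast h)
  nlinarith [mul_self_pos.mpr h']

lemma amgm_le (a b : ℕ) : 2 * (a * b) ≤ a * a + b * b := by
  rcases eq_or_ne a b with rfl | h
  · exact le_of_eq (by ring)
  · exact (amgm_lt a b h).le

theorem gammaRect_Mpure_symmetric (S : Set ℕ) {ν : ℕ} [NeZero ν] (g : Fin ν → ℕ) (hν : 2 ≤ ν)
    (hS : IsNumSgp S) (hgen : MinimalGen S g) (hmono : StrictMono g)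
    (hmpos : 0 < g 0) (hmul : ∀ s ∈ S, s ≠ 0 → g 0 ≤ s)
    (f : ℕ) (hf : f ∉ S) (hfmax : ∀ n, f < n → n ∈ S)
    (hrect : AperySet S (g 0) = GammaSet S (g 0) g) :
    ∀ ω, InApery S (g 0) ω → predM S ω (f + g 0) := by
  classical
  obtain ⟨hgen1, -⟩ := hgen
  have hgpos : ∀ i, 0 < g i := fun i =>
    lt_of_lt_of_le hmpos (hmono.monotone (by rw [Fin.le_def]; simp))
  have hmemS : ∀ lam : Fin ν → ℕ, (∑ i, lam i * g i) ∈ S := fun lam => (hgen1 _).2 ⟨lam, rfl⟩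
  have hgS : ∀ i, g i ∈ S ∧ g i ≠ 0 := by
    intro i
    refine ⟨?_, (hgpos i).ne'⟩
    have := hmemS (fun j => if j = i then 1 else 0)
    simpa [ite_mul, Finset.sum_ite_eq'] using this
  set m := g 0 with hm
  set γ : Fin ν → ℕ := fun i => gammaN S m g i with hγdef
  have hrepe : ∀ (i : Fin ν) (c : ℕ), (∑ j, (if j = i then c else 0) * g j) = c * g i := by
    intro i c
    simp [ite_mul, Finset.sum_ite_eq']
  -- f + m is an Apéry element
  have hFM : InApery S m (f + m) := by
    constructor
    · exact hfmax _ (by omega)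
    · intro u hu hequ
      have : u = f := by omega
      exact hf (this ▸ hu)
  have hApLe : ∀ ω, InApery S m ω → ω ≤ f + m := by
    intro ω hω
    by_contra hcon
    push_neg at hcon
    have h1 : ω - m ∈ S := hfmax _ (by omega)
    exact hω.2 _ h1 (by omega)
  -- boundedness of the γ-defining sets
  have hGbdd : ∀ i, BddAbove {h : ℕ | InApery S m (h * g i) ∧ ordS S (h * g i) = h ∧
      UniqueMaxRep S g (h * g i)} := by
    intro i
    refine ⟨f + m, fun h hh => ?_⟩
    have h1 : h * g i ≤ f + m := hApLe _ hh.1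
    have h2 : h ≤ h * g i := Nat.le_mul_of_pos_right _ (hgpos i)
    omega
  have hGle : ∀ (i : Fin ν) (h : ℕ), InApery S m (h * g i) → ordS S (h * g i) = h →
      UniqueMaxRep S g (h * g i) → h ≤ γ i :=
    fun i h h1 h2 h3 => le_csSup (hGbdd i) ⟨h1, h2, h3⟩
  -- γ 0 = 0
  have hγ0 : γ 0 = 0 := by
    have hzero : (0:ℕ) ∈ {h : ℕ | InApery S m (h * g 0) ∧ ordS S (h * g 0) = h ∧
        UniqueMaxRep S g (h * g 0)} := by
      simp only [Set.mem_setOf_eq, zero_mul]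
      refine ⟨⟨hS.1, fun u hu hequ => by omega⟩, ordS_zero S, ?_⟩
      refine ⟨fun _ => 0, ⟨by simp, by simp [ordS_zero S]⟩, fun lam hlam => funext fun j => ?_⟩
      have h2 := hlam.2
      rw [ordS_zero S] at h2
      exact (Finset.sum_eq_zero_iff).1 h2 j (Finset.mem_univ j)
    refine le_antisymm (csSup_le ⟨0, hzero⟩ (fun b hb => ?_)) (Nat.zero_le _)
    rcases Nat.eq_zero_or_pos b with rfl | hbpos
    · exact le_rfl
    exfalso
    have hu : (b - 1) * g 0 ∈ S := by
      rw [← hrepe 0 (b - 1)]; exact hmemS _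
    have heq : (b - 1) * g 0 + g 0 = b * g 0 := by
      cases b with
      | zero => omega
      | succ n => simp [Nat.succ_sub_one, Nat.succ_mul]
    exact hb.1.2 _ hu heq
  -- f + m = Σ γ_i g_i
  have hFMeq : f + m = ∑ i, γ i * g i := by
    have h1 : (∑ i, γ i * g i) ∈ GammaSet S m g := ⟨γ, hγ0, fun i => le_rfl, rfl⟩
    have h2 : (∑ i, γ i * g i) ∈ AperySet S m := by rw [hrect]; exact h1
    have h3 : ∑ i, γ i * g i ≤ f + m := hApLe _ h2
    have h4 : f + m ∈ GammaSet S m g := by rw [← hrect]; exact hFM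
    obtain ⟨lam, -, hlamle, hlamsum⟩ := h4
    have h5 : f + m ≤ ∑ i, γ i * g i := by
      rw [← hlamsum]
      exact Finset.sum_le_sum fun i _ => Nat.mul_le_mul_right (g i) (hlamle i)
    omega
  -- the set of Φ-values over maximal representations of f + m
  have hFMS : f + m ∈ S := hFM.1
  set T : Set ℕ := {n | ∃ lam : Fin ν → ℕ, (∑ i, lam i * g i = f + m) ∧
      (∑ i, lam i = ordS S (f + m)) ∧ (∑ i, lam i * (g i * g i) = n)} with hTdef
  obtain ⟨lam₀, hl₀, hl₀'⟩ := exists_maxRep S g hgen1 hgS hFMS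
  have hTne : T.Nonempty := ⟨∑ i, lam₀ i * (g i * g i), lam₀, hl₀, hl₀', rfl⟩
  obtain ⟨top, htop⟩ : ∃ t : Fin ν, ∀ i : Fin ν, i ≤ t :=
    ⟨⟨ν - 1, by omega⟩, fun i => by
      rw [Fin.le_def]
      exact (by have := i.2; omega : i.1 ≤ ν - 1)⟩
  have hTbdd : BddAbove T := by
    refine ⟨(f + m) * g top, fun n hn => ?_⟩
    obtain ⟨lam, h1, h2, h3⟩ := hn
    calc n = ∑ i, lam i * (g i * g i) := h3.symm
    _ ≤ ∑ i, lam i * g i * g top := Finset.sum_le_sum fun i _ => by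
        have h4 : g i ≤ g top := hmono.monotone (htop i)
        calc lam i * (g i * g i) = lam i * g i * g i := by ring
        _ ≤ lam i * g i * g top := Nat.mul_le_mul_left _ h4
    _ = (∑ i, lam i * g i) * g top := by rw [Finset.sum_mul]
    _ = (f + m) * g top := by rw [h1]
  obtain ⟨μ, hμrep, hμord, hμΦ⟩ :
      ∃ lam : Fin ν → ℕ, (∑ i, lam i * g i = f + m) ∧ (∑ i, lam i = ordS S (f + m)) ∧
        (∑ i, lam i * (g i * g i) = sSup T) := Nat.sSup_mem hTne hTbdd
  -- any representation of μ i * g i has coefficient sum at most μ i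
  have hrepbound : ∀ (i : Fin ν) (ν₂ : Fin ν → ℕ), (∑ j, ν₂ j * g j = μ i * g i) →
      ∑ j, ν₂ j ≤ μ i := by
    intro i ν₂ hν₂
    have e1 : (∑ j, (if j = i then ν₂ j else μ j + ν₂ j) * g j) + μ i * g i
        = (∑ j, μ j * g j) + ∑ j, ν₂ j * g j := subst_sum μ ν₂ i g
    rw [hμrep, hν₂] at e1
    have hρrep : ∑ j, (if j = i then ν₂ j else μ j + ν₂ j) * g j = f + m :=
      Nat.add_right_cancel e1
    have e2 : (∑ j, (if j = i then ν₂ j else μ j + ν₂ j)) + μ i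
        = (∑ j, μ j) + ∑ j, ν₂ j := by
      simpa only [mul_one] using subst_sum μ ν₂ i (fun _ => 1)
    have h3 : (∑ j, (if j = i then ν₂ j else μ j + ν₂ j)) ≤ ordS S (f + m) :=
      le_ordS_of_rep S g hgS _ hρrep
    linarith [hμord]
  have hordμ : ∀ i, ordS S (μ i * g i) = μ i := by
    intro i
    have hSi : μ i * g i ∈ S := by rw [← hrepe i (μ i)]; exact hmemS _
    obtain ⟨ν₂, hν₂, hν₂'⟩ := exists_maxRep S g hgen1 hgS hSi
    have h1 : ∑ j, ν₂ j ≤ μ i := hrepbound i ν₂ hν₂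
    have h2 : (∑ j, (if j = i then μ i else 0)) ≤ ordS S (μ i * g i) :=
      le_ordS_of_rep S g hgS _ (hrepe i (μ i))
    have h4 : (∑ j, (if j = i then μ i else 0)) = μ i := by simp [Finset.sum_ite_eq']
    have h5 : ordS S (μ i * g i) ≤ μ i := hν₂' ▸ h1
    exact le_antisymm h5 (le_of_eq_of_le h4.symm h2)
  have hApμ : ∀ i, InApery S m (μ i * g i) := by
    intro i
    refine ⟨by rw [← hrepe i (μ i)]; exact hmemS _, ?_⟩
    intro u hu hequ
    have hrest : (∑ j, (if j = i then 0 else μ j) * g j) ∈ S := hmemS _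
    have hsplit : μ i * g i + ∑ j, (if j = i then 0 else μ j) * g j = f + m := by
      have h5 : ∑ j, (if j = i then 0 else μ j) * g j
          = ∑ j ∈ Finset.univ.erase i, μ j * g j := by
        calc ∑ j, (if j = i then 0 else μ j) * g j
            = ∑ j ∈ Finset.univ.erase i, (if j = i then 0 else μ j) * g j :=
              (Finset.sum_erase _ (by simp)).symm
        _ = ∑ j ∈ Finset.univ.erase i, μ j * g j :=
              Finset.sum_congr rfl fun j hj => by simp [Finset.ne_of_mem_erase hj]
      rw [h5, Finset.add_sum_erase _ (fun j => μ j * g j) (Finset.mem_univ i), hμrep]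
    refine hFM.2 (u + ∑ j, (if j = i then 0 else μ j) * g j) (hS.2.1 _ hu _ hrest) ?_
    linarith
  have hUniqμ : ∀ i, UniqueMaxRep S g (μ i * g i) := by
    intro i
    refine ⟨fun j => if j = i then μ i else 0,
      ⟨hrepe i (μ i), by simp [Finset.sum_ite_eq', hordμ i]⟩, ?_⟩
    intro ν₂ hν₂
    obtain ⟨hr, hsum⟩ := hν₂
    rw [hordμ i] at hsum
    by_cases hz : ∀ j, j ≠ i → ν₂ j = 0
    · funext j
      by_cases hj : j = i
      · subst hj
        rw [if_pos rfl]
        have h6 : ∑ k ∈ Finset.univ.erase j, ν₂ k = 0 :=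
          Finset.sum_eq_zero fun k hk => hz k (Finset.ne_of_mem_erase hk)
        have h7 := Finset.add_sum_erase _ ν₂ (Finset.mem_univ j)
        omega
      · rw [if_neg hj]; exact hz j hj
    · exfalso
      push_neg at hz
      obtain ⟨j₀, hj₀i, hj₀⟩ := hz
      have hgne : g i ≠ g j₀ := fun hcon => hj₀i (hmono.injective hcon.symm)
      -- strict Jensen: Φ(ν₂) > μ i * g i ^ 2
      have hkey : μ i * (g i * g i) < ∑ j, ν₂ j * (g j * g j) := by
        have hterm : ∀ j ∈ Finset.univ, ν₂ j * (2 * (g i * g j)) ≤ ν₂ j * (g i * g i + g j * g j) :=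
          fun j _ => Nat.mul_le_mul_left _ (amgm_le (g i) (g j))
        have hstrict : ν₂ j₀ * (2 * (g i * g j₀)) < ν₂ j₀ * (g i * g i + g j₀ * g j₀) :=
          mul_lt_mul_of_pos_left (amgm_lt (g i) (g j₀) hgne) (Nat.pos_of_ne_zero hj₀)
        have hlt := Finset.sum_lt_sum hterm ⟨j₀, Finset.mem_univ j₀, hstrict⟩
        have eL : ∑ j, ν₂ j * (2 * (g i * g j)) = 2 * g i * (μ i * g i) := by
          rw [← hr, Finset.mul_sum]
          exact Finset.sum_congr rfl fun j _ => by ring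
        have eR : ∑ j, ν₂ j * (g i * g i + g j * g j)
            = g i * g i * μ i + ∑ j, ν₂ j * (g j * g j) := by
          rw [Finset.sum_congr rfl (fun j _ =>
            show ν₂ j * (g i * g i + g j * g j)
              = ν₂ j * (g i * g i) + ν₂ j * (g j * g j) from by ring)]
          rw [Finset.sum_add_distrib, ← Finset.sum_mul, hsum]
          ring
        rw [eL, eR] at hlt
        have e3 : 2 * g i * (μ i * g i) = μ i * (g i * g i) + g i * g i * μ i := by ring
        linarith
      -- substitution gives a maximal representation with larger Φ
      have e1 : (∑ j, (if j = i then ν₂ j else μ j + ν₂ j) * g j) + μ i * g i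
          = (∑ j, μ j * g j) + ∑ j, ν₂ j * g j := subst_sum μ ν₂ i g
      rw [hμrep, hr] at e1
      have hρrep : ∑ j, (if j = i then ν₂ j else μ j + ν₂ j) * g j = f + m :=
        Nat.add_right_cancel e1
      have e2 : (∑ j, (if j = i then ν₂ j else μ j + ν₂ j)) + μ i
          = (∑ j, μ j) + ∑ j, ν₂ j := by
        simpa only [mul_one] using subst_sum μ ν₂ i (fun _ => 1)
      have hρord : ∑ j, (if j = i then ν₂ j else μ j + ν₂ j) = ordS S (f + m) := by
        linarith [hμord, hsum]
      have e3 : (∑ j, (if j = i then ν₂ j else μ j + ν₂ j) * (g j * g j)) + μ i * (g i * g i)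
          = (∑ j, μ j * (g j * g j)) + ∑ j, ν₂ j * (g j * g j) :=
        subst_sum μ ν₂ i (fun j => g j * g j)
      have hT3 : (∑ j, (if j = i then ν₂ j else μ j + ν₂ j) * (g j * g j)) ∈ T :=
        ⟨_, hρrep, hρord, rfl⟩
      have hle := le_csSup hTbdd hT3
      linarith [hμΦ]
  -- μ = γ and the order of f + m
  have hμγle : ∀ i, μ i ≤ γ i := fun i => hGle i (μ i) (hApμ i) (hordμ i) (hUniqμ i)
  have hsums : ∑ i, μ i * g i = ∑ i, γ i * g i := by rw [hμrep, hFMeq]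
  have hμγ : ∀ i ∈ Finset.univ, μ i * g i = γ i * g i :=
    (Finset.sum_eq_sum_iff_of_le (fun i _ => Nat.mul_le_mul_right (g i) (hμγle i))).1 hsums
  have hOrdFM : ordS S (f + m) = ∑ i, γ i := by
    rw [← hμord]
    exact Finset.sum_congr rfl fun i hi => Nat.eq_of_mul_eq_mul_right (hgpos i) (hμγ i hi)
  -- conclusion
  intro ω hω
  have hωG : ω ∈ GammaSet S m g := by rw [← hrect]; exact hω
  obtain ⟨lam, hlam0, hlamle, hlamsum⟩ := hωG
  have hωu : ω + ∑ i, (γ i - lam i) * g i = f + m := by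
    rw [← hlamsum, hFMeq, ← Finset.sum_add_distrib]
    exact Finset.sum_congr rfl fun i _ => by
      rw [← add_mul, Nat.add_sub_cancel' (hlamle i)]
  refine ⟨∑ i, (γ i - lam i) * g i, hmemS _, hωu, ?_⟩
  have h1 : ∑ i, lam i ≤ ordS S ω := le_ordS_of_rep S g hgS lam hlamsum
  have h2 : ∑ i, (γ i - lam i) ≤ ordS S (∑ i, (γ i - lam i) * g i) :=
    le_ordS_of_rep S g hgS _ rfl
  have h3 : ∑ i, lam i + ∑ i, (γ i - lam i) = ∑ i, γ i := by
    rw [← Finset.sum_add_distrib]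
    exact Finset.sum_congr rfl fun i _ => Nat.add_sub_cancel' (hlamle i)
  obtain ⟨κ₁, hκ₁, hκ₁'⟩ := exists_maxRep S g hgen1 hgS hω.1
  obtain ⟨κ₂, hκ₂, hκ₂'⟩ := exists_maxRep S g hgen1 hgS (hmemS (fun i => γ i - lam i))
  have h4 : ∑ i, (κ₁ i + κ₂ i) * g i = f + m := by
    have h5 : ∑ i, (κ₁ i + κ₂ i) * g i = (∑ i, κ₁ i * g i) + ∑ i, κ₂ i * g i := by
      rw [← Finset.sum_add_distrib]
      exact Finset.sum_congr rfl fun i _ => add_mul _ _ _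
    rw [h5, hκ₁, hκ₂, hωu]
  have h6 : (∑ i, (κ₁ i + κ₂ i)) ≤ ordS S (f + m) := le_ordS_of_rep S g hgS _ h4
  have h7 : ∑ i, (κ₁ i + κ₂ i) = (∑ i, κ₁ i) + ∑ i, κ₂ i := Finset.sum_add_distrib
  linarith [hOrdFM]
end

section
/- For a numerical semigroup S with multiplicity m and generated by ν elements: if m = Π_{i=2}^ν (γ_i + 1), then ν ≤ Ω(m) + 1, where Ω(m) is the number of prime factors of m counted with multiplicity. In particular, if additionally m is prime then ν = 2. -/
open Finset

section Aux

variable (S : Set ℕ) {ν : ℕ} [NeZero ν] (g : Fin ν → ℕ)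

/-- Any representation of a minimal generator is the trivial one. -/
lemma rep_of_gen (hgen : MinimalGen S g) (hmono : StrictMono g) (hmpos : 0 < g 0)
    (i : Fin ν) (lam : Fin ν → ℕ) (hsum : ∑ k, lam k * g k = g i) :
    lam = Pi.single i 1 := by
  have hgpos : ∀ k, 0 < g k := fun k => lt_of_lt_of_le hmpos (hmono.monotone (Fin.zero_le k))
  rcases Nat.eq_zero_or_pos (lam i) with h0 | h1
  · exact absurd ⟨lam, h0, hsum⟩ (hgen.2 i)
  · have hsplit : lam i * g i + ∑ k ∈ Finset.univ.erase i, lam k * g k = g i :=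
      (Finset.add_sum_erase Finset.univ (fun k => lam k * g k) (Finset.mem_univ i)).trans hsum
    have hle : lam i * g i ≤ 1 * g i := by
      rw [one_mul]; exact le_trans (Nat.le_add_right _ _) hsplit.le
    have hi1 : lam i = 1 := by
      have := Nat.le_of_mul_le_mul_right hle (hgpos i)
      omega
    have hrest : ∑ k ∈ Finset.univ.erase i, lam k * g k = 0 := by
      rw [hi1] at hsplit; omega
    funext k
    rcases eq_or_ne k i with rfl | hk
    · simp [hi1]
    · have hz : lam k * g k = 0 :=
        Finset.sum_eq_zero_iff.mp hrest k (Finset.mem_erase.mpr ⟨hk, Finset.mem_univ k⟩)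
      rcases Nat.mul_eq_zero.mp hz with h | h
      · simp [Pi.single_eq_of_ne hk, h]
      · exact absurd h (hgpos k).ne'

omit [NeZero ν] in
lemma single_sum_mul (i : Fin ν) (c : ℕ) :
    ∑ k, (Pi.single i c : Fin ν → ℕ) k * g k = c * g i := by
  simp [Pi.single_apply, ite_mul]

omit [NeZero ν] in
lemma single_sum (i : Fin ν) (c : ℕ) : ∑ k, (Pi.single i c : Fin ν → ℕ) k = c := by
  simp [Pi.single_apply]

lemma gen_mem (hgen : MinimalGen S g) (i : Fin ν) : g i ∈ S :=
  (hgen.1 (g i)).mpr ⟨Pi.single i 1, by rw [single_sum_mul]; ring⟩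

lemma ordS_gen (hgen : MinimalGen S g) (hmono : StrictMono g) (hmpos : 0 < g 0)
    (i : Fin ν) : ordS S (g i) = 1 := by
  have hgpos : ∀ k, 0 < g k := fun k => lt_of_lt_of_le hmpos (hmono.monotone (Fin.zero_le k))
  have hset : {h : ℕ | ∃ f : Fin h → ℕ, (∀ j, f j ∈ S ∧ f j ≠ 0) ∧ ∑ j, f j = g i} = {1} := by
    ext h
    simp only [Set.mem_setOf_eq, Set.mem_singleton_iff]
    constructor
    · rintro ⟨f, hf, hfs⟩
      choose mu hmu using fun j => (hgen.1 (f j)).mp (hf j).1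
      set lam : Fin ν → ℕ := fun k => ∑ j, mu j k with hlam
      have hsum : ∑ k, lam k * g k = g i := by
        simp only [hlam, Finset.sum_mul, ← hfs]
        rw [Finset.sum_comm]
        exact Finset.sum_congr rfl fun j _ => hmu j
      have hrep := rep_of_gen S g hgen hmono hmpos i lam hsum
      have hlamsum : ∑ k, lam k = 1 := by rw [hrep, single_sum]
      have hge : h ≤ ∑ k, lam k := by
        rw [hlam]
        simp only []
        rw [Finset.sum_comm]
        calc h = ∑ _j : Fin h, 1 := by simp
        _ ≤ ∑ j : Fin h, ∑ k, mu j k := by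
            apply Finset.sum_le_sum
            intro j _
            by_contra hc
            push_neg at hc
            have hz : ∀ k, mu j k = 0 := fun k =>
              Finset.sum_eq_zero_iff.mp (by omega : ∑ k, mu j k = 0) k (Finset.mem_univ k)
            have : f j = 0 := by
              rw [← hmu j]; exact Finset.sum_eq_zero fun k _ => by rw [hz k, zero_mul]
            exact (hf j).2 this
      have h0 : h ≠ 0 := by
        rintro rfl
        rw [Fin.sum_univ_zero] at hfs
        exact absurd hfs.symm (hgpos i).ne'
      omega
    · rintro rfl
      exact ⟨fun _ => g i, fun j => ⟨gen_mem S g hgen i, (hgpos i).ne'⟩, by simp⟩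
  rw [ordS, hset, csSup_singleton]

lemma uniqueMaxRep_gen (hgen : MinimalGen S g) (hmono : StrictMono g) (hmpos : 0 < g 0)
    (i : Fin ν) : UniqueMaxRep S g (g i) := by
  refine ⟨Pi.single i 1, ⟨by rw [single_sum_mul]; ring, ?_⟩, fun lam hlam => ?_⟩
  · rw [ordS_gen S g hgen hmono hmpos, single_sum]
  · exact rep_of_gen S g hgen hmono hmpos i lam hlam.1

lemma inApery_gen (hgen : MinimalGen S g) (hmono : StrictMono g) (hmpos : 0 < g 0)
    (i : Fin ν) (hi : i ≠ 0) : InApery S (g 0) (g i) := by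
  refine ⟨gen_mem S g hgen i, fun u hu heq => ?_⟩
  obtain ⟨mu, hmu⟩ := (hgen.1 u).mp hu
  set lam : Fin ν → ℕ := fun k => mu k + (Pi.single (0 : Fin ν) (1 : ℕ) : Fin ν → ℕ) k with hlamdef
  have hsum : ∑ k, lam k * g k = g i := by
    simp only [hlamdef, add_mul, Finset.sum_add_distrib, hmu]
    rw [single_sum_mul g (0 : Fin ν) 1, one_mul]
    exact heq
  have hrep := rep_of_gen S g hgen hmono hmpos i lam hsum
  have h0 : lam 0 = (Pi.single i 1 : Fin ν → ℕ) 0 := by rw [hrep]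
  simp only [hlamdef, Pi.single_eq_same, Pi.single_eq_of_ne (Ne.symm hi)] at h0
  omega

lemma one_le_gammaN (hS : IsNumSgp S) (hgen : MinimalGen S g)
    (hmono : StrictMono g) (hmpos : 0 < g 0) (i : Fin ν) (hi : i ≠ 0) :
    1 ≤ gammaN S (g 0) g i := by
  have hgpos : ∀ k, 0 < g k := fun k => lt_of_lt_of_le hmpos (hmono.monotone (Fin.zero_le k))
  obtain ⟨F, hF⟩ : ∃ F : ℕ, ∀ n ∉ S, n ≤ F := by
    obtain ⟨F, hF⟩ := hS.2.2.bddAbove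
    exact ⟨F, fun n hn => hF hn⟩
  apply le_csSup
  · refine ⟨F + g 0, fun h hh => ?_⟩
    obtain ⟨⟨hmem, hap⟩, -, -⟩ := hh
    by_contra hc
    push_neg at hc
    have hbig : F + g 0 < h * g i := lt_of_lt_of_le hc (Nat.le_mul_of_pos_right h (hgpos i))
    have hu : h * g i - g 0 ∈ S := by
      by_contra hns
      have := hF _ hns
      omega
    exact hap _ hu (by omega)
  · refine ⟨?_, ?_, ?_⟩
    · rw [one_mul]; exact inApery_gen S g hgen hmono hmpos i hi
    · rw [one_mul]; exact ordS_gen S g hgen hmono hmpos i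
    · rw [one_mul]; exact uniqueMaxRep_gen S g hgen hmono hmpos i

end Aux

lemma card_le_omega_prod {ι : Type*} [DecidableEq ι] (t : Finset ι) (f : ι → ℕ)
    (hf : ∀ i ∈ t, 2 ≤ f i) :
    t.card ≤ (∏ i ∈ t, f i).primeFactorsList.length := by
  induction t using Finset.induction_on with
  | empty => simp
  | @insert a s ha ih =>
    rw [Finset.prod_insert ha, Finset.card_insert_of_notMem ha]
    have hfa : 2 ≤ f a := hf a (Finset.mem_insert_self a s)
    have hprodpos : 0 < ∏ i ∈ s, f i :=
      Finset.prod_pos fun i hi => by have := hf i (Finset.mem_insert_of_mem hi); omega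
    have hperm := Nat.perm_primeFactorsList_mul (a := f a) (b := ∏ i ∈ s, f i)
      (by omega) hprodpos.ne'
    rw [hperm.length_eq, List.length_append]
    have h1 : 1 ≤ (f a).primeFactorsList.length := by
      rcases List.eq_nil_or_concat (f a).primeFactorsList with h | h
      · rw [Nat.primeFactorsList_eq_nil] at h; omega
      · obtain ⟨L, x, hLx⟩ := h; rw [hLx]; simp
    have h2 := ih fun i hi => hf i (Finset.mem_insert_of_mem hi)
    omega

theorem embdim_le_Omega_mult (S : Set ℕ) {ν : ℕ} [NeZero ν] (g : Fin ν → ℕ) (hν : 2 ≤ ν)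
    (hS : IsNumSgp S) (hgen : MinimalGen S g) (hmono : StrictMono g)
    (hmpos : 0 < g 0) (hmul : ∀ s ∈ S, s ≠ 0 → g 0 ≤ s)
    (hprod : g 0 = ∏ i ∈ Finset.univ.erase 0, (gammaN S (g 0) g i + 1)) :
    ν ≤ (g 0).primeFactorsList.length + 1 ∧ (Nat.Prime (g 0) → ν = 2) := by
  have hfac : ∀ i ∈ Finset.univ.erase (0 : Fin ν), 2 ≤ gammaN S (g 0) g i + 1 := by
    intro i hi
    have := one_le_gammaN S g hS hgen hmono hmpos i (Finset.mem_erase.mp hi).1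
    omega
  have hcard : (Finset.univ.erase (0 : Fin ν)).card = ν - 1 := by
    rw [Finset.card_erase_of_mem (Finset.mem_univ _), Finset.card_univ, Fintype.card_fin]
  have hmain := card_le_omega_prod (Finset.univ.erase (0 : Fin ν)) _ hfac
  rw [hcard, ← hprod] at hmain
  constructor
  · omega
  · intro hp
    have := Nat.primeFactorsList_prime hp
    rw [this] at hmain
    simp at hmain
    omega
end
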